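/- Let G be a left partially ordered group (a ≤ b implies ca ≤ cb for all c) with identity e and positive cone G⁺ = {x ∈ G : x > e}, and let 𝒥 be the set of all downward closed nonempty finite subsets of G⁺, with associated density σ_𝒥. Let A and B be subsets of G⁺ with σ_𝒥(A) = α and σ_𝒥(B) = β. Suppose that for every J ∈ 𝒥 and every x ∈ J \ B, the set B*(x) = {b ∈ B : b < x} is nonempty and finite. Then σ_𝒥(BA) ≥ α + β − αβ. -/

import Mathlib

/-- A subset `S` of the positive cone `G⁺ = {x : 1 < x}` is downward closed if
`x ∈ S` implies `(e, x) ⊆ S`. -/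
def DownwardClosed {G : Type*} [Group G] [PartialOrder G] (S : Set G) : Prop :=
  S ⊆ Set.Ioi 1 ∧ ∀ x ∈ S, Set.Ioo (1 : G) x ⊆ S

/-- The collection of all downward closed nonempty finite subsets of the
positive cone of `G`. -/
def goodJ (G : Type*) [Group G] [PartialOrder G] : Set (Set G) :=
  {J | J.Nonempty ∧ J.Finite ∧ DownwardClosed J}

/-- The density `σ_𝒥(A) = inf { |A ∩ J| / |J| : J ∈ 𝒥 }` determined by a
collection `𝒥` of subsets of `X`. -/
noncomputable def densJ {X : Type*} (𝒥 : Set (Set X)) (A : Set X) : ℝ :=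
  sInf ((fun J => ((A ∩ J).ncard : ℝ) / (J.ncard : ℝ)) '' 𝒥)

/-- The product set `BA = {ba : b ∈ B ∪ {e}, a ∈ A ∪ {e}}`. -/
def prodset {G : Type*} [Group G] (B A : Set G) : Set G :=
  {g | ∃ b ∈ B ∪ {1}, ∃ a ∈ A ∪ {1}, b * a = g}

section Aux

variable {G : Type*} [Group G] [PartialOrder G] [CovariantClass G G (· * ·) (· ≤ ·)]

lemma mul_lt_mul_left_po (c : G) {a b : G} (h : a < b) : c * a < c * b :=
  lt_of_le_of_ne (mul_le_mul_right h.le c) fun he => h.ne (mul_left_cancel he)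

omit [CovariantClass G G (· * ·) (· ≤ ·)] in
lemma subset_prodset_left (B A : Set G) : B ⊆ prodset B A := fun b hb =>
  ⟨b, Or.inl hb, 1, Or.inr rfl, mul_one b⟩

/-- Key counting lemma: `|BA ∩ J| ≥ |B ∩ J| + α |J \ B|` for all `J ∈ 𝒥`. -/
lemma key_count (A B : Set G) (hB : B ⊆ Set.Ioi 1) (α : ℝ)
    (hα1 : ∀ C ∈ goodJ G, α * (C.ncard : ℝ) ≤ ((A ∩ C).ncard : ℝ))
    (hBx : ∀ J ∈ goodJ G, ∀ x ∈ J \ B,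
      (B ∩ Set.Iio x).Nonempty ∧ (B ∩ Set.Iio x).Finite) :
    ∀ n : ℕ, ∀ J ∈ goodJ G, J.ncard = n →
      ((B ∩ J).ncard : ℝ) + α * (((J \ B)).ncard : ℝ)
        ≤ ((prodset B A ∩ J).ncard : ℝ) := by
  intro n
  induction n using Nat.strong_induction_on with
  | _ n IH =>
  rintro J ⟨hne, hfin, hsub1, hdc⟩ hn
  rcases Set.eq_empty_or_nonempty (J \ B) with hJB | ⟨x₀, hx₀⟩
  · -- J ⊆ B
    have hJsubB : J ⊆ B := by
      intro x hx
      by_contra hxB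
      exact (Set.eq_empty_iff_forall_notMem.mp hJB x) ⟨hx, hxB⟩
    have h1 : B ∩ J = J := Set.inter_eq_right.mpr hJsubB
    have h2 : prodset B A ∩ J = J :=
      Set.inter_eq_right.mpr (fun x hx => subset_prodset_left B A (hJsubB hx))
    rw [h1, h2, hJB]
    simp
  · -- J \ B nonempty
    obtain ⟨⟨b₀, hb₀B, hb₀x⟩, -⟩ := hBx J ⟨hne, hfin, hsub1, hdc⟩ x₀ hx₀
    have hb₀J : b₀ ∈ J := hdc x₀ hx₀.1 ⟨hB hb₀B, hb₀x⟩
    have hBJfin : (B ∩ J).Finite := hfin.subset Set.inter_subset_right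
    have hBJne : (B ∩ J).Nonempty := ⟨b₀, hb₀B, hb₀J⟩
    obtain ⟨b, hbBJ, hbmax⟩ := Set.Finite.exists_maximalFor id (B ∩ J) hBJfin hBJne
    simp only [id] at hbmax
    set I : Set G := {z ∈ J | b < z} with hIdef
    have hIJ : I ⊆ J := Set.sep_subset _ _
    have hfinI : I.Finite := hfin.subset hIJ
    have hbJ : b ∈ J := hbBJ.2
    have hbB : b ∈ B := hbBJ.1
    have hpJfin : (prodset B A ∩ J).Finite := hfin.subset Set.inter_subset_right
    rcases Set.eq_empty_or_nonempty I with hIe | ⟨z₀, hz₀⟩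
    · -- no element of J is above b : remove b
      have hnotabove : ∀ z ∈ J, ¬ b < z := fun z hz hlt =>
        (Set.eq_empty_iff_forall_notMem.mp hIe z) ⟨hz, hlt⟩
      set J' : Set G := J \ {b} with hJ'def
      have hbJ' : b ∉ J' := fun h => h.2 rfl
      have hJ'fin : J'.Finite := hfin.subset Set.diff_subset
      have hx₀J' : x₀ ∈ J' := ⟨hx₀.1, fun h => hx₀.2 (by rwa [Set.mem_singleton_iff.mp h])⟩
      have hJ'good : J' ∈ goodJ G := by
        refine ⟨⟨x₀, hx₀J'⟩, hJ'fin, fun x hx => hsub1 hx.1, ?_⟩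
        intro x hx y hy
        have hyJ : y ∈ J := hdc x hx.1 hy
        refine ⟨hyJ, fun hyb => ?_⟩
        rw [Set.mem_singleton_iff.mp hyb] at hy
        exact hnotabove x hx.1 hy.2
      have hJeq : J = insert b J' := by
        rw [hJ'def, Set.insert_diff_singleton, Set.insert_eq_self.mpr hbJ]
      have hcard : J.ncard = J'.ncard + 1 := by
        rw [hJeq, Set.ncard_insert_of_notMem hbJ' hJ'fin]
      have hlt : J'.ncard < n := by omega
      have hIH := IH J'.ncard hlt J' hJ'good rfl
      -- set identities
      have hBJ : B ∩ J = insert b (B ∩ J') := by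
        ext z
        simp only [Set.mem_inter_iff, Set.mem_insert_iff, hJ'def, Set.mem_diff,
          Set.mem_singleton_iff]
        constructor
        · rintro ⟨hzB, hzJ⟩
          by_cases hzb : z = b
          · exact Or.inl hzb
          · exact Or.inr ⟨hzB, hzJ, hzb⟩
        · rintro (rfl | ⟨hzB, hzJ, -⟩)
          · exact hbBJ
          · exact ⟨hzB, hzJ⟩
      have hbnBJ' : b ∉ B ∩ J' := fun h => hbJ' h.2
      have hBJcard : (B ∩ J).ncard = (B ∩ J').ncard + 1 := by
        rw [hBJ, Set.ncard_insert_of_notMem hbnBJ' (hJ'fin.subset Set.inter_subset_right)]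
      have hdiffeq : J \ B = J' \ B := by
        ext z
        simp only [hJ'def, Set.mem_diff, Set.mem_singleton_iff]
        constructor
        · rintro ⟨hzJ, hzB⟩
          exact ⟨⟨hzJ, fun h => hzB (h ▸ hbB)⟩, hzB⟩
        · rintro ⟨⟨hzJ, -⟩, hzB⟩
          exact ⟨hzJ, hzB⟩
      have hpeq : prodset B A ∩ J = insert b (prodset B A ∩ J') := by
        ext z
        simp only [Set.mem_inter_iff, Set.mem_insert_iff, hJ'def, Set.mem_diff,
          Set.mem_singleton_iff]
        constructor
        · rintro ⟨hzp, hzJ⟩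
          by_cases hzb : z = b
          · exact Or.inl hzb
          · exact Or.inr ⟨hzp, hzJ, hzb⟩
        · rintro (rfl | ⟨hzp, hzJ, -⟩)
          · exact ⟨subset_prodset_left B A hbB, hbJ⟩
          · exact ⟨hzp, hzJ⟩
      have hbnp : b ∉ prodset B A ∩ J' := fun h => hbJ' h.2
      have hpcard : (prodset B A ∩ J).ncard = (prodset B A ∩ J').ncard + 1 := by
        rw [hpeq, Set.ncard_insert_of_notMem hbnp (hJ'fin.subset Set.inter_subset_right)]
      rw [hBJcard, hdiffeq, hpcard]
      push_cast
      linarith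
    · -- I nonempty : remove the up-set I of b
      have hIB : ∀ z ∈ I, z ∉ B := by
        rintro z ⟨hzJ, hbz⟩ hzB
        exact hbz.ne (le_antisymm hbz.le (hbmax ⟨hzB, hzJ⟩ hbz.le))
      set C : Set G := (fun z => b⁻¹ * z) '' I with hCdef
      have hCfin : C.Finite := hfinI.image _
      have hCgood : C ∈ goodJ G := by
        refine ⟨⟨b⁻¹ * z₀, ⟨z₀, hz₀, rfl⟩⟩, hCfin, ?_, ?_⟩
        · rintro _ ⟨z, ⟨hzJ, hbz⟩, rfl⟩
          have := mul_lt_mul_left_po b⁻¹ hbz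
          rwa [inv_mul_cancel] at this
        · rintro _ ⟨z, ⟨hzJ, hbz⟩, rfl⟩ y ⟨hy1, hyz⟩
          have hbby : b < b * y := by
            have := mul_lt_mul_left_po b hy1
            rwa [mul_one] at this
          have hbyz : b * y < z := by
            have := mul_lt_mul_left_po b hyz
            rwa [mul_inv_cancel_left] at this
          have h1by : (1 : G) < b * y := lt_trans (hsub1 hbJ) hbby
          have hbyJ : b * y ∈ J := hdc z hzJ ⟨h1by, hbyz⟩
          exact ⟨b * y, ⟨hbyJ, hbby⟩, by
            show b⁻¹ * (b * y) = y
            rw [inv_mul_cancel_left]⟩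
      have hCcard : C.ncard = I.ncard :=
        Set.ncard_image_of_injective _ (mul_right_injective b⁻¹)
      have hαC := hα1 C hCgood
      set T : Set G := (fun a => b * a) '' (A ∩ C) with hTdef
      have hACfin : (A ∩ C).Finite := hCfin.subset Set.inter_subset_right
      have hTfin : T.Finite := hACfin.image _
      have hTcard : T.ncard = (A ∩ C).ncard :=
        Set.ncard_image_of_injective _ (mul_right_injective b)
      have hTsub : T ⊆ prodset B A ∩ I := by
        rintro _ ⟨a, ⟨haA, ⟨z, hzI, rfl⟩⟩, rfl⟩
        show b * (b⁻¹ * z) ∈ prodset B A ∩ I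
        rw [mul_inv_cancel_left]
        exact ⟨⟨b, Or.inl hbB, b⁻¹ * z, Or.inl haA, mul_inv_cancel_left b z⟩, hzI⟩
      set J' : Set G := J \ I with hJ'def
      have hJ'fin : J'.Finite := hfin.subset Set.diff_subset
      have hbJ' : b ∈ J' := ⟨hbJ, fun h => lt_irrefl b h.2⟩
      have hJ'good : J' ∈ goodJ G := by
        refine ⟨⟨b, hbJ'⟩, hJ'fin, fun x hx => hsub1 hx.1, ?_⟩
        rintro x ⟨hxJ, hxI⟩ y hy
        refine ⟨hdc x hxJ hy, fun hyI => hxI ⟨hxJ, hyI.2.trans hy.2⟩⟩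
      have hJsplit : J = J' ∪ I := by
        ext z
        simp only [hJ'def, Set.mem_union, Set.mem_diff]
        constructor
        · intro hz
          by_cases hzI : z ∈ I
          · exact Or.inr hzI
          · exact Or.inl ⟨hz, hzI⟩
        · rintro (⟨hz, -⟩ | hz)
          · exact hz
          · exact hIJ hz
      have hdisj : Disjoint J' I := Set.disjoint_left.mpr fun z hz => hz.2
      have hJcard : J.ncard = J'.ncard + I.ncard := by
        conv_lhs => rw [hJsplit]
        rw [Set.ncard_union_eq hdisj hJ'fin hfinI]
      have hIpos : 0 < I.ncard := (Set.ncard_pos hfinI).mpr ⟨z₀, hz₀⟩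
      have hlt : J'.ncard < n := by omega
      have hIH := IH J'.ncard hlt J' hJ'good rfl
      -- B ∩ J' = B ∩ J
      have hBJ' : B ∩ J' = B ∩ J := by
        ext z
        simp only [Set.mem_inter_iff, hJ'def, Set.mem_diff]
        constructor
        · rintro ⟨hzB, hzJ, -⟩
          exact ⟨hzB, hzJ⟩
        · rintro ⟨hzB, hzJ⟩
          exact ⟨hzB, hzJ, fun hzI => hIB z hzI hzB⟩
      -- J \ B = (J' \ B) ∪ I
      have hdiffsplit : J \ B = (J' \ B) ∪ I := by
        ext z
        simp only [Set.mem_diff, Set.mem_union, hJ'def]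
        constructor
        · rintro ⟨hzJ, hzB⟩
          by_cases hzI : z ∈ I
          · exact Or.inr hzI
          · exact Or.inl ⟨⟨hzJ, hzI⟩, hzB⟩
        · rintro (⟨⟨hzJ, -⟩, hzB⟩ | hzI)
          · exact ⟨hzJ, hzB⟩
          · exact ⟨hIJ hzI, hIB z hzI⟩
      have hdisj2 : Disjoint (J' \ B) I := Set.disjoint_left.mpr fun z hz => hz.1.2
      have hdiffcard : (J \ B).ncard = (J' \ B).ncard + I.ncard := by
        rw [hdiffsplit, Set.ncard_union_eq hdisj2 (hJ'fin.subset Set.diff_subset) hfinI]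
      -- prodset counting
      have hsubU : (prodset B A ∩ J') ∪ T ⊆ prodset B A ∩ J := by
        rintro z (⟨hzp, hzJ, -⟩ | hzT)
        · exact ⟨hzp, hzJ⟩
        · exact ⟨(hTsub hzT).1, hIJ (hTsub hzT).2⟩
      have hdisj3 : Disjoint (prodset B A ∩ J') T :=
        Set.disjoint_left.mpr fun z hz hzT => hz.2.2 (hTsub hzT).2
      have hUcard : (prodset B A ∩ J').ncard + T.ncard ≤ (prodset B A ∩ J).ncard := by
        rw [← Set.ncard_union_eq hdisj3 (hJ'fin.subset Set.inter_subset_right) hTfin]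
        exact Set.ncard_le_ncard hsubU hpJfin
      rw [← hBJ', hdiffcard]
      have h1 : α * (I.ncard : ℝ) ≤ (T.ncard : ℝ) := by
        rw [hTcard]
        calc α * (I.ncard : ℝ) = α * (C.ncard : ℝ) := by rw [hCcard]
        _ ≤ ((A ∩ C).ncard : ℝ) := hαC
      have h2 : ((prodset B A ∩ J').ncard : ℝ) + (T.ncard : ℝ)
          ≤ ((prodset B A ∩ J).ncard : ℝ) := by exact_mod_cast hUcard
      push_cast
      linarith

end Aux

/-- Shnirel'man's inequality in a left partially ordered group:
`σ_𝒥(BA) ≥ α + β - αβ`. -/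
theorem densJ_prodset_ge_left
    {G : Type*} [Group G] [PartialOrder G]
    [CovariantClass G G (· * ·) (· ≤ ·)]
    (A B : Set G) (hA : A ⊆ Set.Ioi 1) (hB : B ⊆ Set.Ioi 1)
    (α β : ℝ) (hα : densJ (goodJ G) A = α) (hβ : densJ (goodJ G) B = β)
    (hBx : ∀ J ∈ goodJ G, ∀ x ∈ J \ B,
      (B ∩ Set.Iio x).Nonempty ∧ (B ∩ Set.Iio x).Finite) :
    densJ (goodJ G) (prodset B A) ≥ α + β - α * β := by
  rcases Set.eq_empty_or_nonempty (goodJ G) with hemp | ⟨J₀, hJ₀⟩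
  · subst hα hβ
    simp [densJ, hemp, Real.sInf_empty]
  · unfold densJ at hα hβ
    have hbdd : ∀ (X : Set G), BddBelow
        ((fun J => ((X ∩ J).ncard : ℝ) / (J.ncard : ℝ)) '' goodJ G) := by
      intro X
      refine ⟨0, ?_⟩
      rintro v ⟨J, hJ, rfl⟩
      exact div_nonneg (Nat.cast_nonneg _) (Nat.cast_nonneg _)
    have hpos : ∀ J ∈ goodJ G, (0 : ℝ) < (J.ncard : ℝ) := by
      rintro J ⟨hne, hfin, -⟩
      exact_mod_cast (Set.ncard_pos hfin).mpr hne
    have hα1 : ∀ C ∈ goodJ G, α * (C.ncard : ℝ) ≤ ((A ∩ C).ncard : ℝ) := by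
      intro C hC
      have h := hα ▸ csInf_le (hbdd A) (Set.mem_image_of_mem _ hC)
      have hc := hpos C hC
      calc α * (C.ncard : ℝ) ≤ (((A ∩ C).ncard : ℝ) / (C.ncard : ℝ)) * (C.ncard : ℝ) :=
            mul_le_mul_of_nonneg_right h hc.le
        _ = ((A ∩ C).ncard : ℝ) := div_mul_cancel₀ _ hc.ne'
    have hβ1 : ∀ C ∈ goodJ G, β * (C.ncard : ℝ) ≤ ((B ∩ C).ncard : ℝ) := by
      intro C hC
      have h := hβ ▸ csInf_le (hbdd B) (Set.mem_image_of_mem _ hC)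
      have hc := hpos C hC
      calc β * (C.ncard : ℝ) ≤ (((B ∩ C).ncard : ℝ) / (C.ncard : ℝ)) * (C.ncard : ℝ) :=
            mul_le_mul_of_nonneg_right h hc.le
        _ = ((B ∩ C).ncard : ℝ) := div_mul_cancel₀ _ hc.ne'
    have hαle1 : α ≤ 1 := by
      have h := hα ▸ csInf_le (hbdd A) (Set.mem_image_of_mem _ hJ₀)
      refine h.trans ?_
      rw [div_le_one (hpos J₀ hJ₀)]
      exact_mod_cast Set.ncard_le_ncard Set.inter_subset_right hJ₀.2.1
    unfold densJ
    refine le_csInf ⟨_, Set.mem_image_of_mem _ hJ₀⟩ ?_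
    rintro v ⟨J, hJ, rfl⟩
    have hkey := key_count A B hB α hα1 hBx J.ncard J hJ rfl
    have hfin : J.Finite := hJ.2.1
    have hm := hpos J hJ
    show α + β - α * β ≤ ((prodset B A ∩ J).ncard : ℝ) / (J.ncard : ℝ)
    rw [le_div_iff₀ hm]
    -- cardinal identity : |J \ B| + |B ∩ J| = |J|
    have hsplit : (J \ B).ncard + (B ∩ J).ncard = J.ncard := by
      have : J = (J \ B) ∪ (B ∩ J) := by
        ext z
        simp only [Set.mem_union, Set.mem_diff, Set.mem_inter_iff]
        constructor
        · intro hz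
          by_cases hzB : z ∈ B
          · exact Or.inr ⟨hzB, hz⟩
          · exact Or.inl ⟨hz, hzB⟩
        · rintro (⟨hz, -⟩ | ⟨-, hz⟩) <;> exact hz
      rw [← Set.ncard_union_eq (Set.disjoint_left.mpr fun z hz h => hz.2 h.1)
        (hfin.subset Set.diff_subset) (hfin.subset Set.inter_subset_right), ← this]
    have hsplitR : ((J \ B).ncard : ℝ) + ((B ∩ J).ncard : ℝ) = (J.ncard : ℝ) := by
      exact_mod_cast hsplit
    have hβJ := hβ1 J hJ
    nlinarith [mul_le_mul_of_nonneg_left hβJ (sub_nonneg.mpr hαle1)]
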